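/- Let A = 15+4√14, B = 15-4√14. For i ≥ 0 define c_{4i+3} = ((26+7√14)A^i-(26-7√14)B^i)/(2√14) and e_{4i+1} = ((11+3√14)A^i-(11-3√14)B^i)/(2√14). Then for every n ≥ 1, Σ_{k=0}^{n-1} c_{4k+3} · e_{4(n-k-1)+1} = (n/56)·[(580+155√14)A^{n-1} + (580-155√14)B^{n-1}] + (√14/392)·(A^n - B^n). -/
import Mathlib


theorem stmt_8
    (c3 e1 : ℕ → ℝ)
    (hc3 : ∀ i : ℕ, c3 i =
      ((26 + 7 * Real.sqrt 14) * (15 + 4 * Real.sqrt 14) ^ i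
        - (26 - 7 * Real.sqrt 14) * (15 - 4 * Real.sqrt 14) ^ i)
      / (2 * Real.sqrt 14))
    (he1 : ∀ i : ℕ, e1 i =
      ((11 + 3 * Real.sqrt 14) * (15 + 4 * Real.sqrt 14) ^ i
        - (11 - 3 * Real.sqrt 14) * (15 - 4 * Real.sqrt 14) ^ i)
      / (2 * Real.sqrt 14)) :
    ∀ n : ℕ, 1 ≤ n →
      ∑ k ∈ Finset.range n, c3 k * e1 (n - k - 1) =
        (n / 56 : ℝ) * ((580 + 155 * Real.sqrt 14) * (15 + 4 * Real.sqrt 14) ^ (n-1)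
          + (580 - 155 * Real.sqrt 14) * (15 - 4 * Real.sqrt 14) ^ (n-1))
        + (Real.sqrt 14 / 392) *
            ((15 + 4 * Real.sqrt 14) ^ n - (15 - 4 * Real.sqrt 14) ^ n) := by
  intro n hn
  obtain ⟨m, rfl⟩ : ∃ m, n = m + 1 := ⟨n - 1, (Nat.succ_pred_eq_of_pos hn).symm⟩
  have h14 : Real.sqrt 14 * Real.sqrt 14 = 14 := Real.mul_self_sqrt (by norm_num)
  have hsne : Real.sqrt 14 ≠ 0 := by positivity
  set s := Real.sqrt 14 with hsdef
  have hstep : ∀ k ∈ Finset.range (m+1), c3 k * e1 (m + 1 - k - 1)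
      = ((580+155*s)*(15+4*s)^m + (580-155*s)*(15-4*s)^m
          + (8+s)*((15+4*s)^k*(15-4*s)^(m-k))
          + (8-s)*((15-4*s)^k*(15+4*s)^(m-k)))/56 := by
    intro k hk
    have hk' : k ≤ m := Nat.lt_succ_iff.mp (Finset.mem_range.mp hk)
    have h1 : m + 1 - k - 1 = m - k := by omega
    rw [hc3 k, he1 (m + 1 - k - 1), h1]
    have hAA : (15+4*s)^k * (15+4*s)^(m-k) = (15+4*s)^m := by
      rw [← pow_add]; congr 1; omega
    have hBB : (15-4*s)^k * (15-4*s)^(m-k) = (15-4*s)^m := by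
      rw [← pow_add]; congr 1; omega
    rw [← hAA, ← hBB, div_mul_div_comm]
    rw [div_eq_div_iff (by positivity) (by norm_num : (56:ℝ) ≠ 0)]
    linear_combination ((-620*s-1144)*((15+4*s)^k*(15+4*s)^(m-k))
      + (-4*s+1144)*((15+4*s)^k*(15-4*s)^(m-k))
      + (4*s+1144)*((15-4*s)^k*(15+4*s)^(m-k))
      + (620*s-1144)*((15-4*s)^k*(15-4*s)^(m-k))) * h14
  rw [Finset.sum_congr rfl hstep]
  rw [← Finset.sum_div]
  simp only [Finset.sum_add_distrib, ← Finset.mul_sum, Finset.sum_const,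
    Finset.card_range, nsmul_eq_mul]
  have hG := geom_sum₂_mul (15+4*s) (15-4*s) (m+1)
  have hG' := geom_sum₂_mul (15-4*s) (15+4*s) (m+1)
  simp only [Nat.add_sub_cancel] at hG hG' ⊢
  set G : ℝ := ∑ k ∈ Finset.range (m+1), (15+4*s)^k * (15-4*s)^(m-k) with hGdef
  set G' : ℝ := ∑ k ∈ Finset.range (m+1), (15-4*s)^k * (15+4*s)^(m-k) with hG'def
  have hD : (8*s) * G = (15+4*s)^(m+1) - (15-4*s)^(m+1) := by
    rw [← hG]; ring
  have hD' : (8*s) * G' = (15+4*s)^(m+1) - (15-4*s)^(m+1) := by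
    rw [← neg_sub ((15-4*s)^(m+1)), ← hG']; ring
  push_cast
  linear_combination (1/448 + s/784) * hD + (-1/448 + s/784) * hD' - ((G+G')/98) * h14
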